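/- Define μ₁ = μ₂ = 1 and μ_n = Σ_{i+j+k=n, i,j,k≥1} μ_i μ_j μ_k for n ≥ 3, and let λ be the sequence with λ₁ = 1 and λ_n = Σ_{i+j+k=n+1} λ_i λ_j λ_k. Then μ_n ≤ λ_{n-1} for all n ≥ 2; in particular μ_n ≤ 8^{n-2}. -/
import Mathlib

open Finset

/-- Reindexing: the sum of the cubic convolutions for `m = 2, …, n` is a sub-sum of the
cube of the partial sum up to `n - 1`. -/
lemma aux_reindex (L : ℕ → ℝ) (hLpos : ∀ m, 1 ≤ m → 0 < L m) (n : ℕ) :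
    ∑ m ∈ Icc 2 n, ∑ i ∈ Ico 1 m, ∑ j ∈ Ico 1 (m + 1 - i),
        L i * L j * L (m + 1 - i - j)
      ≤ (∑ i ∈ Icc 1 (n - 1), L i) ^ 3 := by
  have hcube : (∑ i ∈ Icc 1 (n-1), L i) ^ 3
      = ∑ p ∈ Icc 1 (n-1) ×ˢ Icc 1 (n-1) ×ˢ Icc 1 (n-1), L p.1 * L p.2.1 * L p.2.2 := by
    rw [Finset.sum_product]
    simp_rw [Finset.sum_product, mul_assoc, ← Finset.mul_sum, ← Finset.sum_mul]
    ring
  rw [hcube]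
  rw [Finset.sum_sigma', Finset.sum_sigma']
  set T := (Icc 1 (n-1) ×ˢ Icc 1 (n-1) ×ˢ Icc 1 (n-1)).filter
    (fun p : ℕ × ℕ × ℕ => p.1 + p.2.1 + p.2.2 ≤ n + 1) with hT
  have heq : ∑ y ∈ ((Icc 2 n).sigma fun m => Ico 1 m).sigma
        (fun x => Ico 1 (x.1 + 1 - x.2)),
        L y.1.2 * L y.2 * L (y.1.1 + 1 - y.1.2 - y.2)
      = ∑ p ∈ T, L p.1 * L p.2.1 * L p.2.2 := by
    apply Finset.sum_nbij' (i := fun y => (y.1.2, y.2, y.1.1 + 1 - y.1.2 - y.2))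
      (j := fun p => ⟨⟨p.1 + p.2.1 + p.2.2 - 1, p.1⟩, p.2.1⟩)
    · rintro ⟨⟨m, i⟩, j⟩ hy
      simp only [Finset.mem_sigma, Finset.mem_Icc, Finset.mem_Ico] at hy
      simp only [hT, Finset.mem_filter, Finset.mem_product, Finset.mem_Icc]
      omega
    · rintro ⟨i, j, k⟩ hp
      simp only [hT, Finset.mem_filter, Finset.mem_product, Finset.mem_Icc] at hp
      simp only [Finset.mem_sigma, Finset.mem_Icc, Finset.mem_Ico]
      omega
    · rintro ⟨⟨m, i⟩, j⟩ hy
      simp only [Finset.mem_sigma, Finset.mem_Icc, Finset.mem_Ico] at hy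
      have hm : i + j + (m + 1 - i - j) - 1 = m := by omega
      simp [hm]
    · rintro ⟨i, j, k⟩ hp
      simp only [hT, Finset.mem_filter, Finset.mem_product, Finset.mem_Icc] at hp
      simp only [Prod.mk.injEq]
      refine ⟨trivial, trivial, by omega⟩
    · rintro ⟨⟨m, i⟩, j⟩ hy
      rfl
  rw [heq]
  apply Finset.sum_le_sum_of_subset_of_nonneg (Finset.filter_subset _ _)
  intro p hp _
  simp only [Finset.mem_product, Finset.mem_Icc] at hp
  have := hLpos p.1 hp.1.1
  have := hLpos p.2.1 hp.2.1.1
  have := hLpos p.2.2 hp.2.2.1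
  positivity

/-- The partial-sum trick: a positive sequence with `L 1 = 1` and
`8 L m = Σ_{i+j+k=m+1} L i L j L k` is bounded by `1`. -/
lemma aux_L_le_one (L : ℕ → ℝ) (hL1 : L 1 = 1) (hLpos : ∀ m, 1 ≤ m → 0 < L m)
    (hLrec : ∀ m, 2 ≤ m → 8 * L m = ∑ i ∈ Ico 1 m, ∑ j ∈ Ico 1 (m + 1 - i),
        L i * L j * L (m + 1 - i - j)) :
    ∀ m, 1 ≤ m → L m ≤ 1 := by
  have key := aux_reindex L hLpos
  have hnonneg : ∀ k, 0 ≤ ∑ m ∈ Icc 1 k, L m := by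
    intro k
    apply Finset.sum_nonneg
    intro m hm
    exact (hLpos m (mem_Icc.mp hm).1).le
  have hstep : ∀ n, 2 ≤ n → ∑ m ∈ Icc 1 n, L m
      ≤ 1 + (∑ m ∈ Icc 1 (n - 1), L m) ^ 3 / 8 := by
    intro n hn
    have hsplit : Icc 1 n = insert 1 (Icc 2 n) := by
      ext x; simp only [mem_Icc, mem_insert]; omega
    rw [hsplit, Finset.sum_insert (by simp)]
    have h8 : 8 * ∑ m ∈ Icc 2 n, L m
        = ∑ m ∈ Icc 2 n, ∑ i ∈ Ico 1 m, ∑ j ∈ Ico 1 (m + 1 - i),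
            L i * L j * L (m + 1 - i - j) := by
      rw [Finset.mul_sum]
      exact Finset.sum_congr rfl fun m hm => hLrec m (mem_Icc.mp hm).1
    have hb := key n
    rw [← h8] at hb
    rw [hL1]
    linarith
  have hS2 : ∀ n, 1 ≤ n → ∑ m ∈ Icc 1 n, L m ≤ 2 := by
    intro n
    induction n using Nat.strong_induction_on with
    | _ n ih =>
      intro hn
      rcases eq_or_lt_of_le hn with h | h
      · simp [← h, hL1]
      · have hn2 : 2 ≤ n := h
        have ihn := ih (n - 1) (by omega) (by omega)
        have := hstep n hn2
        have h0 := hnonneg (n - 1)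
        set s := ∑ m ∈ Icc 1 (n - 1), L m with hs
        have hsq : s ^ 2 ≤ 2 * s := by nlinarith [mul_nonneg (sub_nonneg.mpr ihn) h0]
        have hcube : s ^ 3 ≤ 8 := by nlinarith [mul_nonneg (sub_nonneg.mpr ihn) (sq_nonneg s)]
        linarith
  intro m hm
  rcases eq_or_lt_of_le hm with h | h
  · rw [← h, hL1]
  · have hm2 : 2 ≤ m := h
    have hsplit : Icc 1 m = insert m (Icc 1 (m - 1)) := by
      ext x; simp only [mem_Icc, mem_insert]; omega
    have hLm : L m = ∑ k ∈ Icc 1 m, L k - ∑ k ∈ Icc 1 (m - 1), L k := by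
      rw [hsplit, Finset.sum_insert (by simp only [mem_Icc]; omega)]
      ring
    have h1 : (1:ℝ) ≤ ∑ k ∈ Icc 1 (m - 1), L k := by
      rw [← hL1]
      apply Finset.single_le_sum (f := L)
        (fun k hk => (hLpos k (mem_Icc.mp hk).1).le)
      simp only [mem_Icc]; omega
    have h2 := hS2 (m - 1) (by omega)
    have h3 := hstep m hm2
    rw [hLm]
    set s := ∑ k ∈ Icc 1 (m - 1), L k with hs
    have h0 : (0:ℝ) ≤ s := by linarith
    have hsq : s ^ 2 ≤ 2 * s := by nlinarith [mul_nonneg (sub_nonneg.mpr h2) h0]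
    have hcube : s ^ 3 ≤ 8 * s := by
      nlinarith [mul_nonneg (sub_nonneg.mpr h2) (sq_nonneg s),
        mul_le_mul_of_nonneg_left hsq h0]
    linarith

section LamFacts

variable {lam : ℕ → ℝ}
  (hl1 : lam 1 = 1)
  (hlrec : ∀ n, 2 ≤ n → lam n =
      ∑ i ∈ Finset.Ico 1 n, ∑ j ∈ Finset.Ico 1 (n + 1 - i),
        lam i * lam j * lam (n + 1 - i - j))

include hl1 hlrec

lemma lam_pos : ∀ n, 1 ≤ n → 0 < lam n := by
  intro n
  induction n using Nat.strong_induction_on with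
  | _ n ih =>
    intro hn
    rcases eq_or_lt_of_le hn with h | h
    · simp [← h, hl1]
    · have h2 : 2 ≤ n := h
      rw [hlrec n h2]
      apply Finset.sum_pos
      · intro i hi
        simp only [Finset.mem_Ico] at hi
        apply Finset.sum_pos
        · intro j hj
          simp only [Finset.mem_Ico] at hj
          have p1 := ih i (by omega) (by omega)
          have p2 := ih j (by omega) (by omega)
          have p3 := ih (n + 1 - i - j) (by omega) (by omega)
          positivity
        · exact ⟨1, by simp [Finset.mem_Ico]; omega⟩
      · exact ⟨1, by simp [Finset.mem_Ico]; omega⟩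

lemma lam_le_pow : ∀ m, 1 ≤ m → lam m ≤ 8 ^ (m - 1) := by
  have hpos := lam_pos hl1 hlrec
  set L : ℕ → ℝ := fun m => lam m / 8 ^ (m - 1) with hLdef
  have hL1 : L 1 = 1 := by simp [hLdef, hl1]
  have hLpos : ∀ m, 1 ≤ m → 0 < L m := by
    intro m hm
    have := hpos m hm
    simp only [hLdef]
    positivity
  have hLrec : ∀ m, 2 ≤ m → 8 * L m = ∑ i ∈ Ico 1 m, ∑ j ∈ Ico 1 (m + 1 - i),
      L i * L j * L (m + 1 - i - j) := by
    intro m hm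
    have key : ∀ i ∈ Finset.Ico 1 m, ∀ j ∈ Finset.Ico 1 (m + 1 - i),
        L i * L j * L (m + 1 - i - j)
          = lam i * lam j * lam (m + 1 - i - j) / 8 ^ (m - 2) := by
      intro i hi j hj
      simp only [Finset.mem_Ico] at hi hj
      simp only [hLdef]
      rw [div_mul_div_comm, div_mul_div_comm, ← pow_add, ← pow_add]
      congr 2
      omega
    rw [Finset.sum_congr rfl fun i hi => Finset.sum_congr rfl fun j hj => key i hi j hj]
    simp only [← Finset.sum_div]
    rw [← hlrec m hm]
    simp only [hLdef]
    rw [eq_div_iff (by positivity), mul_comm 8 (lam m / 8 ^ (m - 1)), mul_assoc,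
      ← pow_succ', show m - 2 + 1 = m - 1 from by omega,
      div_mul_cancel₀ _ (by positivity : (8:ℝ) ^ (m-1) ≠ 0)]
  intro m hm
  have := aux_L_le_one L hL1 hLpos hLrec m hm
  simp only [hLdef] at this
  rw [div_le_one (by positivity)] at this
  exact this

lemma lam_mono : ∀ n, 2 ≤ n → lam (n - 1) ≤ lam n := by
  have hpos := lam_pos hl1 hlrec
  intro n hn
  have e1 : n + 1 - 1 = n := by omega
  have e2 : n + 1 - 1 - 1 = n - 1 := by omega
  calc lam (n - 1) = lam 1 * lam 1 * lam (n + 1 - 1 - 1) := by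
        rw [hl1, e2]; ring
    _ ≤ ∑ j ∈ Ico 1 (n + 1 - 1), lam 1 * lam j * lam (n + 1 - 1 - j) := by
        apply Finset.single_le_sum (f := fun j => lam 1 * lam j * lam (n + 1 - 1 - j))
        · intro j hj
          simp only [mem_Ico] at hj
          have := hpos 1 le_rfl
          have := hpos j (by omega)
          have := hpos (n + 1 - 1 - j) (by omega)
          positivity
        · simp only [mem_Ico]; omega
    _ ≤ ∑ i ∈ Ico 1 n, ∑ j ∈ Ico 1 (n + 1 - i), lam i * lam j * lam (n + 1 - i - j) := by
        apply Finset.single_le_sum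
          (f := fun i => ∑ j ∈ Ico 1 (n + 1 - i), lam i * lam j * lam (n + 1 - i - j))
        · intro i hi
          simp only [mem_Ico] at hi
          apply Finset.sum_nonneg
          intro j hj
          simp only [mem_Ico] at hj
          have := hpos i (by omega)
          have := hpos j (by omega)
          have := hpos (n + 1 - i - j) (by omega)
          positivity
        · simp only [mem_Ico]; omega
    _ = lam n := (hlrec n hn).symm

end LamFacts

/-- for `μ₁ = μ₂ = 1`, `μ_n = Σ_{i+j+k=n} μ_i μ_j μ_k` and the shifted
cubic sequence `λ₁ = 1`, `λ_n = Σ_{i+j+k=n+1} λ_i λ_j λ_k`, one has `μ_n ≤ λ_{n-1}`,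
in particular `μ_n ≤ 8^{n-2}`. -/
theorem mu_le_shifted_cubic_sequence
    (μ lam : ℕ → ℝ)
    (hμ1 : μ 1 = 1) (hμ2 : μ 2 = 1)
    (hμrec : ∀ n, 3 ≤ n → μ n =
      ∑ i ∈ Finset.Ico 1 n, ∑ j ∈ Finset.Ico 1 (n - i),
        μ i * μ j * μ (n - i - j))
    (hl1 : lam 1 = 1)
    (hlrec : ∀ n, 2 ≤ n → lam n =
      ∑ i ∈ Finset.Ico 1 n, ∑ j ∈ Finset.Ico 1 (n + 1 - i),
        lam i * lam j * lam (n + 1 - i - j)) :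
    ∀ n, 2 ≤ n → μ n ≤ lam (n - 1) ∧ μ n ≤ 8 ^ (n - 2) := by
  have hpos := lam_pos hl1 hlrec
  have hle := lam_le_pow hl1 hlrec
  have hmono := lam_mono hl1 hlrec
  -- lam 2 = 1
  have hl2 : lam 2 = 1 := by
    rw [hlrec 2 le_rfl]
    have h1 : Finset.Ico 1 2 = {1} := by decide
    have h2 : Finset.Ico 1 (3 - 1) = {1} := by decide
    norm_num [h1, hl1]
  -- main strong induction
  have hmain : ∀ n, 1 ≤ n → (0 < μ n ∧ μ n ≤ lam n) ∧ (2 ≤ n → μ n ≤ lam (n - 1)) := by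
    intro n
    induction n using Nat.strong_induction_on with
    | _ n ih =>
      intro hn
      rcases lt_or_ge n 3 with h3 | h3
      · interval_cases n
        · exact ⟨⟨by rw [hμ1]; norm_num, by rw [hμ1, hl1]⟩, by omega⟩
        · exact ⟨⟨by rw [hμ2]; norm_num, by rw [hμ2, hl2]⟩,
            fun _ => by rw [hμ2]; simp [hl1]⟩
      · -- n ≥ 3
        have hterm : ∀ i ∈ Finset.Ico 1 n, ∀ j ∈ Finset.Ico 1 (n - i),
            0 < μ i * μ j * μ (n - i - j) ∧
            μ i * μ j * μ (n - i - j) ≤ lam i * lam j * lam (n - i - j) := by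
          intro i hi j hj
          simp only [Finset.mem_Ico] at hi hj
          obtain ⟨⟨pi, li⟩, -⟩ := ih i (by omega) (by omega)
          obtain ⟨⟨pj, lj⟩, -⟩ := ih j (by omega) (by omega)
          obtain ⟨⟨pk, lk⟩, -⟩ := ih (n - i - j) (by omega) (by omega)
          constructor
          · positivity
          · apply mul_le_mul (mul_le_mul li lj pj.le (hpos i (by omega)).le) lk pk.le
            have := hpos i (by omega)
            have := hpos j (by omega)
            positivity
        have hμpos : 0 < μ n := by
          rw [hμrec n h3]
          apply Finset.sum_pos'
          · intro i hi
            apply Finset.sum_nonneg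
            intro j hj
            exact (hterm i hi j hj).1.le
          · refine ⟨1, by simp only [Finset.mem_Ico]; omega, ?_⟩
            apply Finset.sum_pos
            · intro j hj
              exact (hterm 1 (by simp only [Finset.mem_Ico]; omega) j hj).1
            · exact ⟨1, by simp only [Finset.mem_Ico]; omega⟩
        have hμle : μ n ≤ lam (n - 1) := by
          rw [hμrec n h3]
          have step1 : ∑ i ∈ Finset.Ico 1 n, ∑ j ∈ Finset.Ico 1 (n - i),
              μ i * μ j * μ (n - i - j)
              ≤ ∑ i ∈ Finset.Ico 1 n, ∑ j ∈ Finset.Ico 1 (n - i),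
                lam i * lam j * lam (n - i - j) := by
            apply Finset.sum_le_sum
            intro i hi
            apply Finset.sum_le_sum
            intro j hj
            exact (hterm i hi j hj).2
          have step2 : ∑ i ∈ Finset.Ico 1 n, ∑ j ∈ Finset.Ico 1 (n - i),
              lam i * lam j * lam (n - i - j) = lam (n - 1) := by
            rw [hlrec (n - 1) (by omega)]
            have e : n - 1 + 1 = n := by omega
            rw [e]
            have esplit : Finset.Ico 1 n = insert (n - 1) (Finset.Ico 1 (n - 1)) := by
              ext x; simp only [Finset.mem_Ico, Finset.mem_insert]; omega
            rw [esplit, Finset.sum_insert (by simp only [Finset.mem_Ico]; omega)]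
            have : Finset.Ico 1 (n - (n - 1)) = ∅ := by
              have : n - (n - 1) = 1 := by omega
              rw [this]; rfl
            rw [this]
            simp
          linarith
        refine ⟨⟨hμpos, le_trans hμle (hmono n (by omega))⟩, fun _ => hμle⟩
  intro n hn
  obtain ⟨-, h2⟩ := hmain n (by omega)
  have hμl := h2 hn
  refine ⟨hμl, le_trans hμl ?_⟩
  have := hle (n - 1) (by omega)
  have e : n - 1 - 1 = n - 2 := by omega
  rwa [e] at this
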